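/- If f ∈ ℤ[x] is monic and all complex roots of the Graeffe transform g = f_e² - x·f_o² of f are roots of unity, then all complex roots of f are roots of unity. -/

import Mathlib

open Polynomial

/-- The even part of a polynomial: `f_e = Σ a_{2i} x^i`. -/
noncomputable def evenPart {R : Type*} [CommRing R] (f : R[X]) : R[X] :=
  ∑ i ∈ Finset.range (f.natDegree + 1), C (f.coeff (2 * i)) * X ^ i

/-- The odd part of a polynomial: `f_o = Σ a_{2i+1} x^i`. -/
noncomputable def oddPart {R : Type*} [CommRing R] (f : R[X]) : R[X] :=
  ∑ i ∈ Finset.range (f.natDegree + 1), C (f.coeff (2 * i + 1)) * X ^ i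

lemma sum_range_two_mul' {M : Type*} [AddCommMonoid M] (a : ℕ → M) (n : ℕ) :
    ∑ j ∈ Finset.range (2 * n), a j = ∑ i ∈ Finset.range n, (a (2 * i) + a (2 * i + 1)) := by
  induction n with
  | zero => simp
  | succ n ih =>
      rw [Nat.mul_succ, Finset.sum_range_succ, Finset.sum_range_succ, Finset.sum_range_succ, ← ih]
      abel

lemma key (f : ℤ[X]) (z : ℂ) :
    aeval (z ^ 2) (evenPart f) + z * aeval (z ^ 2) (oddPart f) = aeval z f := by
  have h : aeval z f = ∑ j ∈ Finset.range (2 * (f.natDegree + 1)), f.coeff j • z ^ j := by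
    rw [aeval_eq_sum_range' (n := 2 * (f.natDegree + 1)) (by omega) z]
  rw [h, sum_range_two_mul' (fun j => f.coeff j • z ^ j)]
  simp only [evenPart, oddPart, map_sum, map_mul, map_pow, aeval_C, aeval_X, Finset.mul_sum,
    zsmul_eq_mul, ← Finset.sum_add_distrib]
  apply Finset.sum_congr rfl
  intro i _
  simp only [algebraMap_int_eq, eq_intCast]
  ring_nf

theorem stmt_19 (f : ℤ[X]) (hf : f.Monic)
    (hg : ∀ z : ℂ, aeval z (evenPart f ^ 2 - X * oddPart f ^ 2) = 0 →
      ∃ m : ℕ, 0 < m ∧ z ^ m = 1) :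
    ∀ z : ℂ, aeval z f = 0 → ∃ m : ℕ, 0 < m ∧ z ^ m = 1 := by
  intro z hz
  have h1 := key f z
  have h2 := key f (-z)
  have hsq : (-z) ^ 2 = z ^ 2 := by ring
  rw [hsq] at h2
  have hgz : aeval (z ^ 2) (evenPart f ^ 2 - X * oddPart f ^ 2) = 0 := by
    have : aeval z f * aeval (-z) f = aeval (z ^ 2) (evenPart f ^ 2 - X * oddPart f ^ 2) := by
      rw [← h1, ← h2]
      simp only [map_sub, map_mul, map_pow, aeval_X]
      ring
    rw [← this, hz, zero_mul]
  obtain ⟨m, hm, hzm⟩ := hg _ hgz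
  exact ⟨2 * m, by omega, by rw [pow_mul]; exact hzm⟩
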